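/- Let s, t ≥ 0 with 0 < |t - s| < 1. Then the function z(x) = [Γ(x+t)/Γ(x+s)]^{1/(t-s)} − x is convex on (0, ∞). -/

import Mathlib

open Real Set

namespace ZC

/-- sinh is convex on [0,∞) -/
lemma sinh_convex : ConvexOn ℝ (Ici (0:ℝ)) Real.sinh := by
  apply convexOn_of_deriv2_nonneg (convex_Ici 0) Real.continuous_sinh.continuousOn
  · exact Real.differentiable_sinh.differentiableOn
  · rw [Real.deriv_sinh]
    exact Real.differentiable_cosh.differentiableOn
  · intro x hx
    rw [interior_Ici] at hx
    have : deriv^[2] Real.sinh x = Real.sinh x := by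
      simp [Function.iterate_succ, Real.deriv_sinh, Real.deriv_cosh]
    rw [this]
    exact Real.sinh_nonneg_iff.2 (le_of_lt hx)

lemma sinh_mul_le {d y : ℝ} (hd0 : 0 ≤ d) (hd1 : d ≤ 1) (hy : 0 ≤ y) :
    Real.sinh (d * y) ≤ d * Real.sinh y := by
  have h := sinh_convex.2 (mem_Ici.2 hy) (mem_Ici.2 (le_refl 0)) hd0
    (by linarith : (0:ℝ) ≤ 1 - d) (by ring)
  simpa [Real.sinh_zero] using h

end ZC

namespace ZC2
open ZC

lemma one_sub_exp_pos {y : ℝ} (hy : 0 < y) : 0 < 1 - Real.exp (-y) := by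
  have : Real.exp (-y) < 1 := Real.exp_lt_one_iff.2 (by linarith)
  linarith

lemma one_sub_exp_eq (y : ℝ) :
    1 - Real.exp (-y) = Real.exp (-(y/2)) * (2 * Real.sinh (y/2)) := by
  rw [Real.sinh_eq]
  have h1 : Real.exp (-(y/2)) * Real.exp (y/2) = 1 := by
    rw [← Real.exp_add]; norm_num
  have h2 : Real.exp (-(y/2)) * Real.exp (-(y/2)) = Real.exp (-y) := by
    rw [← Real.exp_add]; ring_nf
  nlinarith [h1, h2]

lemma exp_div_sq_eq {y : ℝ} (hy : 0 < y) :
    Real.exp (-y) / (1 - Real.exp (-y))^2 = 1 / (2 * Real.sinh (y/2))^2 := by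
  have h2 : Real.exp (-(y/2)) * Real.exp (-(y/2)) = Real.exp (-y) := by
    rw [← Real.exp_add]; ring_nf
  have hs : 0 < Real.sinh (y/2) := Real.sinh_pos_iff.2 (by linarith)
  have he : (0:ℝ) < Real.exp (-y) := Real.exp_pos _
  rw [one_sub_exp_eq y]
  rw [mul_pow, ← h2]
  have hne : Real.exp (-(y/2)) ≠ 0 := (Real.exp_pos _).ne'
  have hsne : (2 * Real.sinh (y/2))^2 ≠ 0 := by positivity
  field_simp

lemma key_ineq {d τ : ℝ} (hd0 : 0 < d) (hd1 : d ≤ 1) (hτ : 0 < τ) :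
    Real.exp (-τ) / (1 - Real.exp (-τ))^2
      ≤ d^2 * (Real.exp (-(d*τ)) / (1 - Real.exp (-(d*τ)))^2) := by
  have hdτ : 0 < d * τ := mul_pos hd0 hτ
  rw [exp_div_sq_eq hτ, exp_div_sq_eq hdτ]
  have hs : 0 < Real.sinh (τ/2) := Real.sinh_pos_iff.2 (by linarith)
  have hb : 0 < Real.sinh (d*τ/2) := Real.sinh_pos_iff.2 (by positivity)
  have hle : Real.sinh (d*τ/2) ≤ d * Real.sinh (τ/2) := by
    have := sinh_mul_le hd0.le hd1 (by linarith : (0:ℝ) ≤ τ/2)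
    simpa [mul_div_assoc] using this
  rw [div_le_iff₀ (by positivity)]
  rw [show d ^ 2 * (1 / (2 * Real.sinh (d*τ/2)) ^ 2) * (2 * Real.sinh (τ/2)) ^ 2
      = (d * (2 * Real.sinh (τ/2)))^2 / (2 * Real.sinh (d*τ/2)) ^ 2 by ring]
  rw [le_div_iff₀ (by positivity)]
  nlinarith [hs, hb, hle]

end ZC2

namespace ZC3
open ZC ZC2

noncomputable def phi (d τ : ℝ) : ℝ :=
  Real.log (1 - Real.exp (-(d*τ))) - Real.log (1 - Real.exp (-τ))

noncomputable def psi (d τ : ℝ) : ℝ :=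
  d * Real.exp (-(d*τ)) / (1 - Real.exp (-(d*τ))) - Real.exp (-τ) / (1 - Real.exp (-τ))

lemma hasDerivAt_aux {c τ : ℝ} (hc : 0 < c) :
    HasDerivAt (fun y => 1 - Real.exp (-(c*y))) (c * Real.exp (-(c*τ))) τ := by
  have h : HasDerivAt (fun y => -(c*y)) (-c) τ := by
    simpa using ((hasDerivAt_id τ).const_mul c).fun_neg
  have := (Real.hasDerivAt_exp (-(c*τ))).comp τ h
  have h2 := this.const_sub 1
  convert h2 using 1
  · rfl
  · rfl
  · rfl
  ring

lemma hasDerivAt_phi {d τ : ℝ} (hd : 0 < d) (hτ : 0 < τ) :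
    HasDerivAt (phi d) (psi d τ) τ := by
  have h1 : HasDerivAt (fun y => Real.log (1 - Real.exp (-(d*y))))
      ((d * Real.exp (-(d*τ))) / (1 - Real.exp (-(d*τ)))) τ :=
    (hasDerivAt_aux hd).log (one_sub_exp_pos (mul_pos hd hτ)).ne'
  have h2 : HasDerivAt (fun y => Real.log (1 - Real.exp (-y)))
      (Real.exp (-τ) / (1 - Real.exp (-τ))) τ := by
    have := (hasDerivAt_aux one_pos (τ := τ)).log (by
      simpa using (one_sub_exp_pos hτ).ne')
    simpa using this
  exact h1.sub h2

lemma hasDerivAt_q {c τ : ℝ} (hc : 0 < c) (hτ : 0 < τ) :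
    HasDerivAt (fun y => c * Real.exp (-(c*y)) / (1 - Real.exp (-(c*y))))
      (-(c^2 * (Real.exp (-(c*τ)) / (1 - Real.exp (-(c*τ)))^2))) τ := by
  have hne := (one_sub_exp_pos (mul_pos hc hτ)).ne'
  have hnum : HasDerivAt (fun y => c * Real.exp (-(c*y)))
      (c * (c * Real.exp (-(c*τ))) * (-1)) τ := by
    have h : HasDerivAt (fun y => -(c*y)) (-c) τ := by
      simpa using ((hasDerivAt_id τ).const_mul c).fun_neg
    have := ((Real.hasDerivAt_exp (-(c*τ))).comp τ h).const_mul c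
    convert this using 1
    · rfl
    · rfl
    · rfl
    ring
  have := hnum.div (hasDerivAt_aux hc) hne
  convert this using 1
  · rfl
  · rfl
  · rfl
  field_simp
  ring

lemma hasDerivAt_psi {d τ : ℝ} (hd : 0 < d) (hτ : 0 < τ) :
    HasDerivAt (psi d)
      (-(d^2 * (Real.exp (-(d*τ)) / (1 - Real.exp (-(d*τ)))^2))
        + Real.exp (-τ) / (1 - Real.exp (-τ))^2) τ := by
  have h1 := hasDerivAt_q hd hτ
  have h2 := hasDerivAt_q one_pos hτ
  simp only [one_mul, one_pow] at h2
  have h3 := h1.sub h2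
  have heq : psi d = fun y => d * Real.exp (-(d*y)) / (1 - Real.exp (-(d*y)))
      - Real.exp (-y) / (1 - Real.exp (-y)) := rfl
  rw [heq]
  convert h3 using 1
  · rfl
  · rfl
  · rfl
  ring

lemma psi_antitone {d : ℝ} (hd0 : 0 < d) (hd1 : d ≤ 1) :
    AntitoneOn (psi d) (Ioi 0) := by
  have hderiv : ∀ τ ∈ Ioi (0:ℝ), deriv (psi d) τ
      = -(d^2 * (Real.exp (-(d*τ)) / (1 - Real.exp (-(d*τ)))^2))
        + Real.exp (-τ) / (1 - Real.exp (-τ))^2 :=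
    fun τ hτ => (hasDerivAt_psi hd0 hτ).deriv
  have := antitoneOn_of_deriv_nonpos (convex_Ioi (0:ℝ))
    (fun τ hτ => ((hasDerivAt_psi hd0 (mem_Ioi.1 hτ)).continuousAt).continuousWithinAt)
    (fun τ hτ => by
      rw [interior_Ioi] at hτ
      exact (hasDerivAt_psi hd0 (mem_Ioi.1 hτ)).differentiableAt.differentiableWithinAt)
    (fun τ hτ => by
      rw [interior_Ioi] at hτ
      rw [hderiv τ hτ]
      have := key_ineq hd0 hd1 (mem_Ioi.1 hτ)
      linarith)
  exact this

lemma phi_concave {d : ℝ} (hd0 : 0 < d) (hd1 : d ≤ 1) :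
    ConcaveOn ℝ (Ioi 0) (phi d) := by
  apply AntitoneOn.concaveOn_of_deriv (convex_Ioi 0)
  · exact fun τ hτ => ((hasDerivAt_phi hd0 (mem_Ioi.1 hτ)).continuousAt).continuousWithinAt
  · intro τ hτ
    rw [interior_Ioi] at hτ
    exact (hasDerivAt_phi hd0 (mem_Ioi.1 hτ)).differentiableAt.differentiableWithinAt
  · intro a ha b hb hab
    rw [interior_Ioi] at ha hb
    rw [(hasDerivAt_phi hd0 (mem_Ioi.1 ha)).deriv, (hasDerivAt_phi hd0 (mem_Ioi.1 hb)).deriv]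
    exact psi_antitone hd0 hd1 ha hb hab

lemma phi_tendsto {d : ℝ} (hd0 : 0 < d) :
    Filter.Tendsto (phi d) (nhdsWithin 0 (Ioi 0)) (nhds (Real.log d)) := by
  have hslope : ∀ c : ℝ, 0 < c → Filter.Tendsto (fun τ => (1 - Real.exp (-(c*τ)))/τ)
      (nhdsWithin 0 (Ioi 0)) (nhds c) := by
    intro c hc
    have h := hasDerivAt_aux (c := c) (τ := 0) hc
    have h2 := h.hasDerivWithinAt (s := Ioi 0)
    rw [hasDerivWithinAt_iff_tendsto_slope] at h2
    have h3 : (Ioi (0:ℝ)) \ {0} = Ioi 0 := by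
      ext y; simp
    rw [h3] at h2
    simp only [mul_zero, neg_zero, Real.exp_zero, mul_one] at h2
    refine Filter.Tendsto.congr' ?_ h2
    filter_upwards [self_mem_nhdsWithin] with τ hτ
    have hτ0 : τ ≠ 0 := ne_of_gt (mem_Ioi.1 hτ)
    simp [slope_def_field]
  have hrat : Filter.Tendsto (fun τ => (1 - Real.exp (-(d*τ)))/(1 - Real.exp (-τ)))
      (nhdsWithin 0 (Ioi 0)) (nhds d) := by
    have h1 := hslope d hd0
    have h2 := hslope 1 one_pos
    simp only [one_mul] at h2
    have := h1.div h2 one_ne_zero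
    simpa using this.congr (fun τ => by
      by_cases hτ : τ = 0
      · simp [hτ]
      · rw [Pi.div_apply, div_div_div_cancel_right₀ hτ])
  have hlog := (Real.continuousAt_log hd0.ne').tendsto.comp hrat
  refine hlog.congr' ?_
  filter_upwards [self_mem_nhdsWithin] with τ hτ
  have hτ0 : 0 < τ := mem_Ioi.1 hτ
  rw [Function.comp_apply, Real.log_div (one_sub_exp_pos (mul_pos hd0 hτ0)).ne'
    (one_sub_exp_pos hτ0).ne']
  rfl


end ZC3

namespace ZC4
open ZC ZC2 ZC3

lemma phi_slope {d σ ρ : ℝ} (hd0 : 0 < d) (hd1 : d ≤ 1) (hσ : 0 < σ) (hρ : 0 < ρ) :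
    (ρ * Real.log d + σ * phi d (σ+ρ)) / (σ+ρ) ≤ phi d σ := by
  have hcc := phi_concave hd0 hd1
  -- for ε ∈ (0, σ): phi σ ≥ a ε * phi ε + b ε * phi (σ+ρ)
  set L := Real.log d
  have hev : ∀ᶠ ε in nhdsWithin 0 (Ioi 0),
      ρ/(σ+ρ-ε) * phi d ε + (σ-ε)/(σ+ρ-ε) * phi d (σ+ρ) ≤ phi d σ := by
    have hmem : Ioo (0:ℝ) σ ∈ nhdsWithin 0 (Ioi 0) :=
      Ioo_mem_nhdsGT_of_mem ⟨le_refl 0, hσ⟩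
    filter_upwards [hmem] with ε hε
    have hε0 : 0 < ε := hε.1
    have hεσ : ε < σ := hε.2
    have hden : 0 < σ + ρ - ε := by linarith
    have ha : (0:ℝ) ≤ ρ/(σ+ρ-ε) := by positivity
    have hb : (0:ℝ) ≤ (σ-ε)/(σ+ρ-ε) := by
      apply div_nonneg <;> linarith
    have hab : ρ/(σ+ρ-ε) + (σ-ε)/(σ+ρ-ε) = 1 := by
      rw [← add_div, show ρ + (σ - ε) = σ + ρ - ε by ring, div_self hden.ne']
    have hcomb := hcc.2 (mem_Ioi.2 hε0) (mem_Ioi.2 (by linarith : (0:ℝ) < σ+ρ)) ha hb hab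
    have hpt : (ρ/(σ+ρ-ε)) • ε + ((σ-ε)/(σ+ρ-ε)) • (σ+ρ) = σ := by
      simp only [smul_eq_mul]
      field_simp
      ring
    rw [hpt] at hcomb
    simpa using hcomb
  have hlim : Filter.Tendsto
      (fun ε => ρ/(σ+ρ-ε) * phi d ε + (σ-ε)/(σ+ρ-ε) * phi d (σ+ρ))
      (nhdsWithin 0 (Ioi 0))
      (nhds (ρ/(σ+ρ) * L + σ/(σ+ρ) * phi d (σ+ρ))) := by
    have hne : σ + ρ ≠ 0 := by positivity
    have h1 : Filter.Tendsto (fun ε : ℝ => ρ/(σ+ρ-ε)) (nhdsWithin 0 (Ioi 0))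
        (nhds (ρ/(σ+ρ))) := by
      apply Filter.Tendsto.mono_left _ nhdsWithin_le_nhds
      have : Filter.Tendsto (fun ε : ℝ => σ+ρ-ε) (nhds 0) (nhds (σ+ρ)) := by
        simpa using (tendsto_const_nhds.sub (Filter.tendsto_id (α := ℝ) (x := nhds 0)))
      exact tendsto_const_nhds.div this hne
    have h2 : Filter.Tendsto (fun ε : ℝ => (σ-ε)/(σ+ρ-ε)) (nhdsWithin 0 (Ioi 0))
        (nhds (σ/(σ+ρ))) := by
      apply Filter.Tendsto.mono_left _ nhdsWithin_le_nhds
      have hn : Filter.Tendsto (fun ε : ℝ => σ-ε) (nhds 0) (nhds σ) := by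
        simpa using (tendsto_const_nhds.sub (Filter.tendsto_id (α := ℝ) (x := nhds 0)))
      have hden : Filter.Tendsto (fun ε : ℝ => σ+ρ-ε) (nhds 0) (nhds (σ+ρ)) := by
        simpa using (tendsto_const_nhds.sub (Filter.tendsto_id (α := ℝ) (x := nhds 0)))
      exact hn.div hden hne
    exact (h1.mul (phi_tendsto hd0)).add (h2.mul tendsto_const_nhds)
  have := le_of_tendsto hlim hev
  calc (ρ * L + σ * phi d (σ+ρ)) / (σ+ρ)
      = ρ/(σ+ρ) * L + σ/(σ+ρ) * phi d (σ+ρ) := by ring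
    _ ≤ phi d σ := this

lemma phi_superadd {d σ ρ : ℝ} (hd0 : 0 < d) (hd1 : d ≤ 1) (hσ : 0 < σ) (hρ : 0 < ρ) :
    Real.log d + phi d (σ+ρ) ≤ phi d σ + phi d ρ := by
  have h1 := phi_slope hd0 hd1 hσ hρ
  have h2 := phi_slope hd0 hd1 hρ hσ
  rw [show ρ + σ = σ + ρ by ring] at h2
  have hpos : 0 < σ + ρ := by linarith
  rw [div_le_iff₀ hpos] at h1 h2
  have := add_le_add h1 h2
  nlinarith [this]

/-- The kernel function. -/
noncomputable def Ffun (d a τ : ℝ) : ℝ :=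
  Real.exp (-(a*τ)) * (1 - Real.exp (-(d*τ))) / (d * (1 - Real.exp (-τ)))

lemma Ffun_eq {d a τ : ℝ} (hd : 0 < d) (hτ : 0 < τ) :
    Ffun d a τ = Real.exp (-(a*τ) + phi d τ - Real.log d) := by
  rw [Real.exp_sub, Real.exp_add, phi, Real.exp_sub,
    Real.exp_log (one_sub_exp_pos (mul_pos hd hτ)), Real.exp_log (one_sub_exp_pos hτ),
    Real.exp_log hd]
  unfold Ffun
  field_simp

lemma Ffun_pos {d a τ : ℝ} (hd : 0 < d) (hτ : 0 < τ) : 0 < Ffun d a τ := by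
  rw [Ffun_eq hd hτ]; exact Real.exp_pos _

lemma Ffun_subadd {d a σ ρ : ℝ} (hd0 : 0 < d) (hd1 : d ≤ 1) (hσ : 0 < σ) (hρ : 0 < ρ) :
    Ffun d a (σ+ρ) ≤ Ffun d a σ * Ffun d a ρ := by
  rw [Ffun_eq hd0 (by linarith), Ffun_eq hd0 hσ, Ffun_eq hd0 hρ, ← Real.exp_add]
  apply Real.exp_le_exp.2
  have := phi_superadd hd0 hd1 hσ hρ
  ring_nf
  ring_nf at this
  linarith

end ZC4

namespace ZB
open MeasureTheory ZC2 ZC4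

lemma tendsto_exp_neg_mul {A : ℝ} (hA : 0 < A) :
    Filter.Tendsto (fun τ : ℝ => Real.exp (-(A*τ))) Filter.atTop (nhds 0) := by
  have h1 : Filter.Tendsto (fun τ : ℝ => A*τ) Filter.atTop Filter.atTop :=
    Filter.Tendsto.const_mul_atTop hA Filter.tendsto_id
  have h2 : Filter.Tendsto (fun τ : ℝ => -(A*τ)) Filter.atTop Filter.atBot :=
    Filter.tendsto_neg_atBot_iff.2 h1
  exact Real.tendsto_exp_atBot.comp h2

lemma integrableOn_exp_neg {A : ℝ} (hA : 0 < A) :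
    IntegrableOn (fun τ : ℝ => Real.exp (-(A*τ))) (Ioi 0) := by
  have h := exp_neg_integrableOn_Ioi 0 hA
  simpa [neg_mul] using h

lemma hasDerivAt_exp_neg {A : ℝ} (hA : A ≠ 0) (τ : ℝ) :
    HasDerivAt (fun y : ℝ => -(Real.exp (-(A*y))/A)) (Real.exp (-(A*τ))) τ := by
  have h : HasDerivAt (fun y => -(A*y)) (-A) τ := by
    simpa using ((hasDerivAt_id τ).const_mul A).fun_neg
  have h2 := ((Real.hasDerivAt_exp (-(A*τ))).comp τ h).div_const A
  have h3 := h2.neg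
  convert h3 using 1
  · rfl
  · rfl
  · rfl
  field_simp

lemma integral_exp_neg {A : ℝ} (hA : 0 < A) :
    ∫ τ in Ioi (0:ℝ), Real.exp (-(A*τ)) = 1/A := by
  have hd : ∀ τ ∈ Ici (0:ℝ), HasDerivAt (fun y : ℝ => -(Real.exp (-(A*y))/A))
      (Real.exp (-(A*τ))) τ := fun τ _ => hasDerivAt_exp_neg hA.ne' τ
  have ht : Filter.Tendsto (fun y : ℝ => -(Real.exp (-(A*y))/A)) Filter.atTop (nhds 0) := by
    have := (tendsto_exp_neg_mul hA).div_const A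
    simpa using this.neg
  have := integral_Ioi_of_hasDerivAt_of_tendsto' hd (integrableOn_exp_neg hA) ht
  rw [this]
  simp

lemma lint_exp_neg {A : ℝ} (hA : 0 < A) :
    ∫⁻ τ in Ioi (0:ℝ), ENNReal.ofReal (Real.exp (-(A*τ))) = ENNReal.ofReal (1/A) := by
  rw [← ofReal_integral_eq_lintegral_ofReal (integrableOn_exp_neg hA)
    (Filter.Eventually.of_forall fun τ => (Real.exp_pos _).le), integral_exp_neg hA]

end ZB

namespace ZB2
open MeasureTheory ZC2 ZC4 ZB

variable {a b : ℝ}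

/-- summand functions -/
noncomputable def Gk (a d : ℝ) (k : ℕ) (τ : ℝ) : ℝ :=
  Real.exp (-((a+k)*τ)) * (1 - Real.exp (-(d*τ))) / d

noncomputable def gk (a b d : ℝ) (k : ℕ) (σ : ℝ) : ℝ :=
  (Real.exp (-((a+k)*σ))/(a+k) - Real.exp (-((b+k)*σ))/(b+k))/d

lemma Gk_eq (hd : b = a + d) (k : ℕ) (τ : ℝ) :
    Gk a d k τ = (Real.exp (-((a+k)*τ)) - Real.exp (-((b+k)*τ)))/d := by
  unfold Gk
  rw [show -((b+k)*τ) = -((a+k)*τ) + -(d*τ) by rw [hd]; ring, Real.exp_add]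
  ring

lemma Gk_nonneg {d : ℝ} (hd : 0 < d) {τ : ℝ} (hτ : 0 ≤ τ) (k : ℕ) : 0 ≤ Gk a d k τ := by
  unfold Gk
  have : Real.exp (-(d*τ)) ≤ 1 := by
    rw [← Real.exp_zero]
    apply Real.exp_le_exp.2
    nlinarith
  have h2 : 0 ≤ 1 - Real.exp (-(d*τ)) := by linarith
  positivity

lemma summable_geom_mul (C : ℝ) {r : ℝ} (h0 : 0 ≤ r) (h1 : r < 1) :
    Summable (fun k : ℕ => C * r^k) :=
  (summable_geometric_of_lt_one h0 h1).mul_left C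

lemma summable_uv (ha : 0 < a) (hb : 0 < b) :
    Summable (fun k : ℕ => 1/((a+k)*(b+k))) := by
  set c := min (min a b) 1 with hc
  have hc0 : 0 < c := lt_min (lt_min ha hb) one_pos
  have hbase : Summable (fun k : ℕ => (1/c^2) * (1/((k:ℝ)+1)^2)) := by
    apply Summable.mul_left
    have h2 : Summable (fun n : ℕ => 1/(n:ℝ)^2) := by
      rw [Real.summable_one_div_nat_pow]
      norm_num
    have := (_root_.summable_nat_add_iff 1).2 h2
    simpa using this
  apply Summable.of_nonneg_of_le (fun k => by positivity) _ hbase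
  intro k
  have hak : c*((k:ℝ)+1) ≤ a + k := by
    have h1 : c ≤ a := le_trans (min_le_left _ _) (min_le_left _ _)
    have h2 : c ≤ 1 := min_le_right _ _
    have : (0:ℝ) ≤ k := Nat.cast_nonneg k
    nlinarith
  have hbk : c*((k:ℝ)+1) ≤ b + k := by
    have h1 : c ≤ b := le_trans (min_le_left _ _) (min_le_right _ _)
    have h2 : c ≤ 1 := min_le_right _ _
    have : (0:ℝ) ≤ k := Nat.cast_nonneg k
    nlinarith
  have hck : 0 < c*((k:ℝ)+1) := by positivity
  calc 1/((a+k)*(b+k)) ≤ 1/((c*((k:ℝ)+1))*(c*((k:ℝ)+1))) := by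
        apply one_div_le_one_div_of_le (by positivity)
        apply mul_le_mul hak hbk hck.le (by nlinarith)
    _ = (1/c^2) * (1/((k:ℝ)+1)^2) := by field_simp
 
lemma summable_uvw (ha : 0 < a) (hab : a < b) :
    Summable (fun k : ℕ => 1/((a+k)*(b+k)) * (1/(a+k) + 1/(b+k))) := by
  have hb : 0 < b := lt_trans ha hab
  apply Summable.of_nonneg_of_le _ _ ((summable_uv ha hb).mul_left (2/a))
  · intro k
    have h1 : (0:ℝ) < a + k := by positivity
    have h2 : (0:ℝ) < b + k := by positivity
    positivity
  · intro k
    have h1 : (0:ℝ) < a + k := by positivity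
    have h2 : (0:ℝ) < b + k := by positivity
    have h3 : 1/(a+k) ≤ 1/a := by
      apply one_div_le_one_div_of_le ha
      simp [Nat.cast_nonneg]
    have h4 : 1/(b+k) ≤ 1/a := by
      apply one_div_le_one_div_of_le ha
      have : (0:ℝ) ≤ k := Nat.cast_nonneg k
      have := hab.le
      linarith
    have h5 : (0:ℝ) ≤ 1/((a+k)*(b+k)) := by positivity
    calc 1/((a+k)*(b+k)) * (1/(a+k) + 1/(b+k)) ≤ 1/((a+k)*(b+k)) * (2/a) := by
          apply mul_le_mul_of_nonneg_left _ h5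
          have := add_le_add h3 h4
          calc 1/(a+k) + 1/(b+k) ≤ 1/a + 1/a := add_le_add h3 h4
            _ = 2/a := by ring
      _ = 2/a * (1/((a+k)*(b+k))) := by ring

end ZB2

namespace ZB3
open MeasureTheory ZC2 ZC4 ZB ZB2

variable {a b d : ℝ}

lemma Gk_integrable (ha : 0 < a) (hd0 : 0 < d) (hb : b = a + d) (k : ℕ) :
    IntegrableOn (Gk a d k) (Ioi (0:ℝ)) := by
  have hA : (0:ℝ) < a + k := by positivity
  have hB : (0:ℝ) < b + k := by rw [hb]; positivity
  have h : IntegrableOn (fun τ : ℝ => (Real.exp (-((a+k)*τ)) - Real.exp (-((b+k)*τ)))/d)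
      (Ioi (0:ℝ)) := ((integrableOn_exp_neg hA).sub (integrableOn_exp_neg hB)).div_const d
  exact h.congr_fun (fun τ _ => (Gk_eq hb k τ).symm) measurableSet_Ioi

lemma Gk_integral (ha : 0 < a) (hd0 : 0 < d) (hb : b = a + d) (k : ℕ) :
    ∫ τ in Ioi (0:ℝ), Gk a d k τ = 1/((a+k)*(b+k)) := by
  have hA : (0:ℝ) < a + k := by positivity
  have hB : (0:ℝ) < b + k := by rw [hb]; positivity
  have h1 : ∫ τ in Ioi (0:ℝ), Gk a d k τ
      = ∫ τ in Ioi (0:ℝ), (Real.exp (-((a+k)*τ)) - Real.exp (-((b+k)*τ)))/d :=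
    setIntegral_congr_fun measurableSet_Ioi (fun τ _ => Gk_eq hb k τ)
  rw [h1, integral_div, integral_sub (integrableOn_exp_neg hA) (integrableOn_exp_neg hB),
    integral_exp_neg hA, integral_exp_neg hB]
  rw [hb]
  field_simp
  ring

lemma Gk_measurable (k : ℕ) : Measurable (Gk a d k) := by
  unfold Gk
  fun_prop

lemma Gk_lintegral (ha : 0 < a) (hd0 : 0 < d) (hb : b = a + d) (k : ℕ) :
    ∫⁻ τ in Ioi (0:ℝ), ENNReal.ofReal (Gk a d k τ) = ENNReal.ofReal (1/((a+k)*(b+k))) := by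
  rw [← ofReal_integral_eq_lintegral_ofReal (Gk_integrable ha hd0 hb k) ?_, Gk_integral ha hd0 hb k]
  filter_upwards [ae_restrict_mem measurableSet_Ioi] with τ hτ
  exact Gk_nonneg hd0 (le_of_lt hτ) k

lemma gk_shift (ha : 0 < a) (hd0 : 0 < d) (hb : b = a + d) (k : ℕ) {σ : ℝ} (hσ : 0 < σ) :
    ∫⁻ ρ in Ioi (0:ℝ), ENNReal.ofReal (Gk a d k (σ+ρ)) = ENNReal.ofReal (gk a b d k σ) := by
  have hA : (0:ℝ) < a + k := by positivity
  have hB : (0:ℝ) < b + k := by rw [hb]; positivity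
  have hptwise : ∀ ρ : ℝ, Gk a d k (σ+ρ)
      = (Real.exp (-((a+k)*σ)) * Real.exp (-((a+k)*ρ))
        - Real.exp (-((b+k)*σ)) * Real.exp (-((b+k)*ρ)))/d := by
    intro ρ
    rw [Gk_eq hb k (σ+ρ), show -((a+k)*(σ+ρ)) = -((a+k)*σ) + -((a+k)*ρ) by ring,
      show -((b+k)*(σ+ρ)) = -((b+k)*σ) + -((b+k)*ρ) by ring, Real.exp_add, Real.exp_add]
  have hint : IntegrableOn (fun ρ : ℝ => (Real.exp (-((a+k)*σ)) * Real.exp (-((a+k)*ρ))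
      - Real.exp (-((b+k)*σ)) * Real.exp (-((b+k)*ρ)))/d) (Ioi 0) :=
    (((integrableOn_exp_neg hA).const_mul _).sub
      ((integrableOn_exp_neg hB).const_mul _)).div_const d
  have hintG : IntegrableOn (fun ρ : ℝ => Gk a d k (σ+ρ)) (Ioi 0) :=
    hint.congr_fun (fun ρ _ => (hptwise ρ).symm) measurableSet_Ioi
  rw [← ofReal_integral_eq_lintegral_ofReal hintG ?_]
  · congr 1
    have h1 : ∫ ρ in Ioi (0:ℝ), Gk a d k (σ+ρ)
        = ∫ ρ in Ioi (0:ℝ), (Real.exp (-((a+k)*σ)) * Real.exp (-((a+k)*ρ))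
          - Real.exp (-((b+k)*σ)) * Real.exp (-((b+k)*ρ)))/d :=
      setIntegral_congr_fun measurableSet_Ioi (fun ρ _ => hptwise ρ)
    rw [h1, integral_div, integral_sub ((integrableOn_exp_neg hA).const_mul _)
      ((integrableOn_exp_neg hB).const_mul _), integral_const_mul, integral_const_mul,
      integral_exp_neg hA, integral_exp_neg hB]
    unfold gk
    field_simp
  · filter_upwards [ae_restrict_mem measurableSet_Ioi] with ρ hρ
    exact Gk_nonneg hd0 (by have := mem_Ioi.1 hρ; linarith : (0:ℝ) ≤ σ + ρ) k

lemma gk_integrable (ha : 0 < a) (hd0 : 0 < d) (hb : b = a + d) (k : ℕ) :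
    IntegrableOn (gk a b d k) (Ioi (0:ℝ)) := by
  have hA : (0:ℝ) < a + k := by positivity
  have hB : (0:ℝ) < b + k := by rw [hb]; positivity
  have h : IntegrableOn (fun σ : ℝ => (Real.exp (-((a+k)*σ))*(1/(a+k))
      - Real.exp (-((b+k)*σ))*(1/(b+k)))/d) (Ioi 0) :=
    (((integrableOn_exp_neg hA).mul_const _).sub
      ((integrableOn_exp_neg hB).mul_const _)).div_const d
  exact h.congr_fun (fun σ _ => by unfold gk; field_simp) measurableSet_Ioi

lemma gk_nonneg (ha : 0 < a) (hd0 : 0 < d) (hb : b = a + d) (k : ℕ) {σ : ℝ} (hσ : 0 ≤ σ) :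
    0 ≤ gk a b d k σ := by
  have hA : (0:ℝ) < a + k := by positivity
  have hB : (0:ℝ) < b + k := by rw [hb]; positivity
  have hAB : a + k ≤ b + k := by rw [hb]; linarith
  unfold gk
  apply div_nonneg _ hd0.le
  rw [sub_nonneg, div_le_div_iff₀ hB hA]
  have h1 : Real.exp (-((b+k)*σ)) ≤ Real.exp (-((a+k)*σ)) := by
    apply Real.exp_le_exp.2
    nlinarith
  nlinarith [Real.exp_pos (-((a+k)*σ)), h1, hAB]

lemma gk_lintegral (ha : 0 < a) (hd0 : 0 < d) (hb : b = a + d) (k : ℕ) :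
    ∫⁻ σ in Ioi (0:ℝ), ENNReal.ofReal (gk a b d k σ)
      = ENNReal.ofReal (1/((a+k)*(b+k)) * (1/(a+k) + 1/(b+k))) := by
  have hA : (0:ℝ) < a + k := by positivity
  have hB : (0:ℝ) < b + k := by rw [hb]; positivity
  rw [← ofReal_integral_eq_lintegral_ofReal (gk_integrable ha hd0 hb k) ?_]
  · congr 1
    have h1 : ∫ σ in Ioi (0:ℝ), gk a b d k σ
        = ∫ σ in Ioi (0:ℝ), (Real.exp (-((a+k)*σ))*(1/(a+k))
          - Real.exp (-((b+k)*σ))*(1/(b+k)))/d :=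
      setIntegral_congr_fun measurableSet_Ioi (fun σ _ => by unfold gk; field_simp)
    rw [h1, integral_div, integral_sub ((integrableOn_exp_neg hA).mul_const _)
      ((integrableOn_exp_neg hB).mul_const _), integral_mul_const, integral_mul_const,
      integral_exp_neg hA, integral_exp_neg hB]
    rw [hb]
    have h1 : a + (k:ℝ) ≠ 0 := by positivity
    have h2 : a + d + (k:ℝ) ≠ 0 := by positivity
    field_simp
    ring
  · filter_upwards [ae_restrict_mem measurableSet_Ioi] with σ hσ
    exact gk_nonneg ha hd0 hb k (le_of_lt hσ)

end ZB3

namespace ZB4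
open MeasureTheory ZC2 ZC4 ZB ZB2 ZB3

variable {a b d : ℝ}

lemma hasSum_Gk (ha : 0 < a) (hd0 : 0 < d) {τ : ℝ} (hτ : 0 < τ) :
    HasSum (fun k : ℕ => Gk a d k τ) (Ffun d a τ) := by
  have hr0 : (0:ℝ) ≤ Real.exp (-τ) := (Real.exp_pos _).le
  have hr1 : Real.exp (-τ) < 1 := Real.exp_lt_one_iff.2 (by linarith)
  have hgeo := (hasSum_geometric_of_lt_one hr0 hr1).mul_left
    (Real.exp (-(a*τ)) * (1 - Real.exp (-(d*τ))) / d)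
  have heq : ∀ k : ℕ, Real.exp (-(a*τ)) * (1 - Real.exp (-(d*τ))) / d * (Real.exp (-τ))^k
      = Gk a d k τ := by
    intro k
    rw [← Real.exp_nat_mul]
    unfold Gk
    rw [show -((a+k)*τ) = -(a*τ) + (k:ℝ)*(-τ) by ring, Real.exp_add]
    ring
  have hF : Real.exp (-(a*τ)) * (1 - Real.exp (-(d*τ))) / d * (1 - Real.exp (-τ))⁻¹
      = Ffun d a τ := by
    unfold Ffun
    have h1 : (1 - Real.exp (-τ)) ≠ 0 := (one_sub_exp_pos hτ).ne'
    field_simp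
  rw [← hF]
  exact (funext heq : _) ▸ hgeo

end ZB4

namespace ZB5
open MeasureTheory ZC2 ZC4 ZB ZB2 ZB3 ZB4

variable {a b d : ℝ}

lemma F_measurable : Measurable (Ffun d a) := by
  unfold Ffun
  fun_prop

lemma gk_measurable (k : ℕ) : Measurable (gk a b d k) := by
  unfold gk
  fun_prop

lemma lint_F (ha : 0 < a) (hd0 : 0 < d) (hb : b = a + d) :
    ∫⁻ τ in Ioi (0:ℝ), ENNReal.ofReal (Ffun d a τ)
      = ENNReal.ofReal (∑' k : ℕ, 1/((a+k)*(b+k))) := by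
  have hb0 : 0 < b := by rw [hb]; linarith
  have h1 : ∫⁻ τ in Ioi (0:ℝ), ENNReal.ofReal (Ffun d a τ)
      = ∫⁻ τ in Ioi (0:ℝ), ∑' k : ℕ, ENNReal.ofReal (Gk a d k τ) := by
    apply setLIntegral_congr_fun measurableSet_Ioi
    intro τ hτ
    dsimp only
    rw [← (hasSum_Gk ha hd0 hτ).tsum_eq,
      ENNReal.ofReal_tsum_of_nonneg (fun k => Gk_nonneg hd0 (le_of_lt hτ) k)
        (hasSum_Gk ha hd0 hτ).summable]
  rw [h1, lintegral_tsum (fun k => ((Gk_measurable k).ennreal_ofReal).aemeasurable),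
    tsum_congr (fun k => Gk_lintegral ha hd0 hb k),
    ← ENNReal.ofReal_tsum_of_nonneg (fun k => by positivity) (summable_uv ha hb0)]

lemma summable_gk (ha : 0 < a) (hd0 : 0 < d) (hb : b = a + d) {σ : ℝ} (hσ : 0 < σ) :
    Summable (fun k : ℕ => gk a b d k σ) := by
  apply Summable.of_nonneg_of_le (fun k => gk_nonneg ha hd0 hb k hσ.le) _
    (summable_geom_mul (1/(d*a)) (Real.exp_pos (-σ)).le
      (Real.exp_lt_one_iff.2 (by linarith)))
  intro k
  have hA : (0:ℝ) < a + k := by positivity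
  have hB : (0:ℝ) < b + k := by rw [hb]; positivity
  have h2 : Real.exp (-((b+k)*σ))/(b+k) ≥ 0 := by positivity
  have h3 : Real.exp (-((a+k)*σ)) ≤ (Real.exp (-σ))^k := by
    rw [← Real.exp_nat_mul]
    apply Real.exp_le_exp.2
    have : (0:ℝ) ≤ k := Nat.cast_nonneg k
    nlinarith
  have h4 : Real.exp (-((a+k)*σ))/(a+k) ≤ (Real.exp (-σ))^k / a := by
    apply div_le_div₀ (by positivity) h3 ha
    simp [Nat.cast_nonneg]
  unfold gk
  rw [div_le_iff₀ hd0]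
  calc Real.exp (-((a+k)*σ))/(a+k) - Real.exp (-((b+k)*σ))/(b+k)
      ≤ Real.exp (-((a+k)*σ))/(a+k) := by linarith
    _ ≤ (Real.exp (-σ))^k / a := h4
    _ = 1/(d*a) * (Real.exp (-σ))^k * d := by field_simp

lemma Phi_eq (ha : 0 < a) (hd0 : 0 < d) (hb : b = a + d) {σ : ℝ} (hσ : 0 < σ) :
    ENNReal.ofReal (∑' k : ℕ, gk a b d k σ)
      = ∫⁻ ρ in Ioi (0:ℝ), ENNReal.ofReal (Ffun d a (σ+ρ)) := by
  rw [ENNReal.ofReal_tsum_of_nonneg (fun k => gk_nonneg ha hd0 hb k hσ.le)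
    (summable_gk ha hd0 hb hσ)]
  rw [tsum_congr (fun k => (gk_shift ha hd0 hb k hσ).symm)]
  have hmeas : ∀ k : ℕ, AEMeasurable (fun ρ : ℝ => ENNReal.ofReal (Gk a d k (σ+ρ)))
      (volume.restrict (Ioi 0)) := by
    intro k
    have hm : Measurable (fun ρ : ℝ => Gk a d k (σ+ρ)) :=
      (Gk_measurable k).comp (measurable_const_add σ)
    exact hm.ennreal_ofReal.aemeasurable
  have h5 : ∑' k : ℕ, ∫⁻ ρ in Ioi (0:ℝ), ENNReal.ofReal (Gk a d k (σ+ρ))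
      = ∫⁻ ρ in Ioi (0:ℝ), ∑' k : ℕ, ENNReal.ofReal (Gk a d k (σ+ρ)) :=
    (lintegral_tsum hmeas).symm
  rw [h5]
  apply setLIntegral_congr_fun measurableSet_Ioi
  intro ρ hρ
  dsimp only
  have hσρ : 0 < σ + ρ := by have := mem_Ioi.1 hρ; linarith
  rw [← (hasSum_Gk ha hd0 hσρ).tsum_eq,
    ENNReal.ofReal_tsum_of_nonneg (fun k => Gk_nonneg hd0 hσρ.le k)
      (hasSum_Gk ha hd0 hσρ).summable]

theorem key_inequality (ha : 0 < a) (hab : a < b) (hba1 : b ≤ a + 1) :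
    ∑' k : ℕ, (1/((a+k)*(b+k)) * (1/(a+k) + 1/(b+k)))
      ≤ (∑' k : ℕ, 1/((a+k)*(b+k)))^2 := by
  set d := b - a with hdd
  have hb : b = a + d := by rw [hdd]; ring
  have hd0 : 0 < d := by rw [hdd]; linarith
  have hd1 : d ≤ 1 := by rw [hdd]; linarith
  have hb0 : 0 < b := by linarith
  set SS := ∑' k : ℕ, 1/((a+k)*(b+k)) with hSS
  set RR := ∑' k : ℕ, (1/((a+k)*(b+k)) * (1/(a+k) + 1/(b+k))) with hRR
  have hSS0 : 0 ≤ SS := tsum_nonneg (fun k => by positivity)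
  have hRR0 : 0 ≤ RR := tsum_nonneg (fun k => by
    have h1 : (0:ℝ) < a + k := by positivity
    have h2 : (0:ℝ) < b + k := by positivity
    positivity)
  -- step 1 : ofReal RR = ∫⁻ σ in Ioi 0, ofReal (Phi σ)
  have step1 : ENNReal.ofReal RR
      = ∫⁻ σ in Ioi (0:ℝ), ENNReal.ofReal (∑' k : ℕ, gk a b d k σ) := by
    rw [hRR, ENNReal.ofReal_tsum_of_nonneg (fun k => by
        have h1 : (0:ℝ) < a + k := by positivity
        have h2 : (0:ℝ) < b + k := by positivity
        positivity) (summable_uvw ha hab),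
      tsum_congr (fun k => (gk_lintegral ha hd0 hb k).symm),
      ← lintegral_tsum (fun k => ((gk_measurable k).ennreal_ofReal).aemeasurable)]
    apply setLIntegral_congr_fun measurableSet_Ioi
    intro σ hσ
    dsimp only
    rw [ENNReal.ofReal_tsum_of_nonneg (fun k => gk_nonneg ha hd0 hb k (le_of_lt hσ))
      (summable_gk ha hd0 hb hσ)]
  -- step 2 : pointwise bound
  have step2 : ∀ σ : ℝ, 0 < σ → ENNReal.ofReal (∑' k : ℕ, gk a b d k σ)
      ≤ ENNReal.ofReal (Ffun d a σ) * ENNReal.ofReal SS := by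
    intro σ hσ
    rw [Phi_eq ha hd0 hb hσ]
    calc ∫⁻ ρ in Ioi (0:ℝ), ENNReal.ofReal (Ffun d a (σ+ρ))
        ≤ ∫⁻ ρ in Ioi (0:ℝ), ENNReal.ofReal (Ffun d a σ * Ffun d a ρ) := by
          apply lintegral_mono_ae
          filter_upwards [ae_restrict_mem measurableSet_Ioi] with ρ hρ
          exact ENNReal.ofReal_le_ofReal (Ffun_subadd hd0 hd1 hσ (mem_Ioi.1 hρ))
      _ = ∫⁻ ρ in Ioi (0:ℝ), ENNReal.ofReal (Ffun d a σ) * ENNReal.ofReal (Ffun d a ρ) := by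
          apply lintegral_congr
          intro ρ
          rw [ENNReal.ofReal_mul (Ffun_pos hd0 hσ).le]
      _ = ENNReal.ofReal (Ffun d a σ) * ∫⁻ ρ in Ioi (0:ℝ), ENNReal.ofReal (Ffun d a ρ) :=
          lintegral_const_mul' _ _ ENNReal.ofReal_ne_top
      _ = ENNReal.ofReal (Ffun d a σ) * ENNReal.ofReal SS := by rw [lint_F ha hd0 hb]
  -- combine
  have main : ENNReal.ofReal RR ≤ ENNReal.ofReal (SS * SS) := by
    rw [step1]
    calc ∫⁻ σ in Ioi (0:ℝ), ENNReal.ofReal (∑' k : ℕ, gk a b d k σ)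
        ≤ ∫⁻ σ in Ioi (0:ℝ), ENNReal.ofReal (Ffun d a σ) * ENNReal.ofReal SS := by
          apply lintegral_mono_ae
          filter_upwards [ae_restrict_mem measurableSet_Ioi] with σ hσ
          exact step2 σ (mem_Ioi.1 hσ)
      _ = (∫⁻ σ in Ioi (0:ℝ), ENNReal.ofReal (Ffun d a σ)) * ENNReal.ofReal SS :=
          lintegral_mul_const' _ _ ENNReal.ofReal_ne_top
      _ = ENNReal.ofReal SS * ENNReal.ofReal SS := by rw [lint_F ha hd0 hb]
      _ = ENNReal.ofReal (SS * SS) := (ENNReal.ofReal_mul hSS0).symm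
  have := (ENNReal.ofReal_le_ofReal_iff (by nlinarith)).1 main
  nlinarith [this]

end ZB5

namespace ZD
open MeasureTheory ZC2 ZC4 ZB2 ZB5 Finset Filter

variable {s t : ℝ}

lemma shiftTU {F : ℕ → ℝ → ℝ} {g : ℝ → ℝ} {K : Set ℝ}
    (h : TendstoUniformlyOn F g atTop K) (m : ℕ) :
    TendstoUniformlyOn (fun n => F (n+m)) g atTop K :=
  fun u hu => (tendsto_add_atTop_nat m).eventually (h u hu)

lemma log_GammaSeq {y : ℝ} (hy : 0 < y) {n : ℕ} (hn : 1 ≤ n) :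
    Real.log (Real.GammaSeq y n)
      = y * Real.log n + Real.log (Nat.factorial n) - ∑ j ∈ Finset.range (n+1), Real.log (y + j) := by
  have hn0 : (0:ℝ) < n := by exact_mod_cast hn
  have hfac : (0:ℝ) < (Nat.factorial n : ℝ) := by exact_mod_cast Nat.factorial_pos n
  have hprod : ∀ j ∈ Finset.range (n+1), y + (j:ℝ) ≠ 0 := by
    intro j _
    have : (0:ℝ) ≤ j := Nat.cast_nonneg j
    positivity
  have hprodpos : (0:ℝ) < ∏ j ∈ Finset.range (n+1), (y + j) := by
    apply Finset.prod_pos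
    intro j _
    have : (0:ℝ) ≤ j := Nat.cast_nonneg j
    positivity
  unfold Real.GammaSeq
  rw [Real.log_div (by positivity) hprodpos.ne', Real.log_mul (by positivity) hfac.ne',
    Real.log_rpow hn0, Real.log_prod hprod]

lemma term_eq {x k : ℝ} (hxs : 0 < x + s + k) (hxt : 0 < x + t + k) :
    1/(x+s+k) - 1/(x+t+k) = (t-s) * (1/((x+s+k)*(x+t+k))) := by
  field_simp
  ring

lemma hasDerivAt_logterm (k : ℕ) {x : ℝ} (hxs : 0 < x + s + (k:ℝ)) (hxt : 0 < x + t + (k:ℝ)) :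
    HasDerivAt (fun y => Real.log (y+s+k) - Real.log (y+t+k))
      (1/(x+s+k) - 1/(x+t+k)) x := by
  have ha : HasDerivAt (fun y:ℝ => y+s+k) 1 x := ((hasDerivAt_id x).add_const s).add_const (k:ℝ)
  have hb : HasDerivAt (fun y:ℝ => y+t+k) 1 x := ((hasDerivAt_id x).add_const t).add_const (k:ℝ)
  have h1 := ha.log hxs.ne'
  have h2 := hb.log hxt.ne'
  have := h1.fun_sub h2
  simpa [one_div] using this

lemma hasDerivAt_term (k : ℕ) {x : ℝ} (hxs : 0 < x + s + (k:ℝ)) (hxt : 0 < x + t + (k:ℝ)) :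
    HasDerivAt (fun y => 1/((y+s+k)*(y+t+k)))
      (-(1/((x+s+k)*(x+t+k)) * (1/(x+s+k)+1/(x+t+k)))) x := by
  have ha : HasDerivAt (fun y:ℝ => y+s+k) 1 x := ((hasDerivAt_id x).add_const s).add_const (k:ℝ)
  have hb : HasDerivAt (fun y:ℝ => y+t+k) 1 x := ((hasDerivAt_id x).add_const t).add_const (k:ℝ)
  have h1 : HasDerivAt (fun y => (y+s+k)*(y+t+k)) ((x+s+k) + (x+t+k)) x := by
    have := ha.mul hb
    convert this using 1
    · rfl
    · rfl
    · rfl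
    ring
  have h2 := h1.inv (mul_pos hxs hxt).ne'
  have h3 : (fun y => 1/((y+s+k)*(y+t+k))) = fun y => ((y+s+k)*(y+t+k))⁻¹ := by
    funext y; rw [one_div]
  rw [h3]
  convert h2 using 1
  · rfl
  · rfl
  · rfl
  field_simp
  ring

lemma TLU_D1 (hs0 : 0 ≤ s) (hst : s < t) :
    TendstoLocallyUniformlyOn
      (fun n x => ∑ k ∈ Finset.range (n+1), (1/(x+s+k) - 1/(x+t+k)))
      (fun x => ∑' k : ℕ, (1/(x+s+k) - 1/(x+t+k))) atTop (Ioi 0) := by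
  rw [tendstoLocallyUniformlyOn_iff_forall_isCompact isOpen_Ioi]
  intro K hK hKc
  rcases K.eq_empty_or_nonempty with rfl | hne
  · exact tendstoUniformlyOn_empty
  have hbdd := hKc.bddBelow
  have hmem := hKc.sInf_mem hne
  set ε := sInf K with hε'
  have hε : 0 < ε := hK hmem
  have hsub : K ⊆ Ici ε := fun y hy => csInf_le hbdd hy
  apply TendstoUniformlyOn.mono _ hsub
  have hsum : Summable (fun k : ℕ => (t-s) * (1/((ε+k)*(ε+k)))) :=
    (summable_uv hε hε).mul_left _
  have hbound : ∀ (k : ℕ) (x : ℝ), x ∈ Ici ε →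
      ‖1/(x+s+k) - 1/(x+t+k)‖ ≤ (t-s) * (1/((ε+k)*(ε+k))) := by
    intro k x hx
    have hxε : ε ≤ x := hx
    have hxs : 0 < x + s + k := by
      have : (0:ℝ) ≤ k := Nat.cast_nonneg k
      linarith
    have hxt : 0 < x + t + k := by
      have : (0:ℝ) ≤ k := Nat.cast_nonneg k
      linarith
    have hek : 0 < ε + (k:ℝ) := by
      have : (0:ℝ) ≤ k := Nat.cast_nonneg k
      linarith
    have hnn : (0:ℝ) ≤ 1/(x+s+k) - 1/(x+t+k) := by
      rw [sub_nonneg]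
      apply one_div_le_one_div_of_le hxs
      linarith
    rw [Real.norm_eq_abs, abs_of_nonneg hnn, term_eq hxs hxt]
    apply mul_le_mul_of_nonneg_left _ (by linarith : (0:ℝ) ≤ t - s)
    apply one_div_le_one_div_of_le (by positivity)
    apply mul_le_mul (by linarith) (by linarith) hek.le hxs.le
  exact shiftTU (tendstoUniformlyOn_tsum_nat hsum hbound) 1

lemma TLU_D2 (hs0 : 0 ≤ s) (hst : s < t) :
    TendstoLocallyUniformlyOn
      (fun n x => ∑ k ∈ Finset.range n, -(1/((x+s+k)*(x+t+k)) * (1/(x+s+k)+1/(x+t+k))))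
      (fun x => ∑' k : ℕ, -(1/((x+s+k)*(x+t+k)) * (1/(x+s+k)+1/(x+t+k)))) atTop (Ioi 0) := by
  rw [tendstoLocallyUniformlyOn_iff_forall_isCompact isOpen_Ioi]
  intro K hK hKc
  rcases K.eq_empty_or_nonempty with rfl | hne
  · exact tendstoUniformlyOn_empty
  have hbdd := hKc.bddBelow
  have hmem := hKc.sInf_mem hne
  set ε := sInf K with hε'
  have hε : 0 < ε := hK hmem
  have hsub : K ⊆ Ici ε := fun y hy => csInf_le hbdd hy
  apply TendstoUniformlyOn.mono _ hsub
  have hsum : Summable (fun k : ℕ => (2/ε) * (1/((ε+k)*(ε+k)))) :=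
    (summable_uv hε hε).mul_left _
  have hbound : ∀ (k : ℕ) (x : ℝ), x ∈ Ici ε →
      ‖-(1/((x+s+k)*(x+t+k)) * (1/(x+s+k)+1/(x+t+k)))‖ ≤ (2/ε) * (1/((ε+k)*(ε+k))) := by
    intro k x hx
    have hxε : ε ≤ x := hx
    have hk0 : (0:ℝ) ≤ k := Nat.cast_nonneg k
    have hxs : 0 < x + s + k := by linarith
    have hxt : 0 < x + t + k := by linarith
    have hek : 0 < ε + (k:ℝ) := by linarith
    rw [norm_neg, Real.norm_eq_abs, abs_of_nonneg (by positivity)]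
    have h1 : 1/(x+s+k) + 1/(x+t+k) ≤ 2/ε := by
      have h2 : 1/(x+s+k) ≤ 1/ε := one_div_le_one_div_of_le hε (by linarith)
      have h3 : 1/(x+t+k) ≤ 1/ε := one_div_le_one_div_of_le hε (by linarith)
      calc 1/(x+s+k) + 1/(x+t+k) ≤ 1/ε + 1/ε := add_le_add h2 h3
        _ = 2/ε := by ring
    have h4 : 1/((x+s+k)*(x+t+k)) ≤ 1/((ε+k)*(ε+k)) := by
      apply one_div_le_one_div_of_le (by positivity)
      apply mul_le_mul (by linarith) (by linarith) hek.le hxs.le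
    calc 1/((x+s+k)*(x+t+k)) * (1/(x+s+k)+1/(x+t+k))
        ≤ 1/((ε+k)*(ε+k)) * (2/ε) := by
          apply mul_le_mul h4 h1 (by positivity) (by positivity)
      _ = (2/ε) * (1/((ε+k)*(ε+k))) := by ring
  exact tendstoUniformlyOn_tsum_nat hsum hbound

end ZD

namespace ZE
open MeasureTheory ZC2 ZC4 ZB2 ZB5 ZD Finset Filter

variable {s t : ℝ}

lemma hasDerivAt_H (hs0 : 0 ≤ s) (hst : s < t) {x : ℝ} (hx : 0 < x) :
    HasDerivAt (fun y => Real.log (Real.Gamma (y+t)) - Real.log (Real.Gamma (y+s)))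
      (∑' k : ℕ, (1/(x+s+k) - 1/(x+t+k))) x := by
  apply hasDerivAt_of_tendstoLocallyUniformlyOn isOpen_Ioi (TLU_D1 hs0 hst)
    (f := fun (n : ℕ) (x : ℝ) => (t-s) * Real.log n
      + ∑ k ∈ Finset.range (n+1), (Real.log (x+s+k) - Real.log (x+t+k)))
    (hx := mem_Ioi.2 hx)
  · apply Filter.Eventually.of_forall
    intro n y hy
    have hy0 : 0 < y := mem_Ioi.1 hy
    apply HasDerivAt.const_add
    apply HasDerivAt.fun_sum
    intro k _
    have hk : (0:ℝ) ≤ k := Nat.cast_nonneg k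
    exact hasDerivAt_logterm k (by linarith) (by linarith)
  · intro y hy
    have hy0 : 0 < y := mem_Ioi.1 hy
    have hyt : 0 < y + t := by linarith
    have hys : 0 < y + s := by linarith
    have h1 : Filter.Tendsto (fun n => Real.log (Real.GammaSeq (y+t) n)) atTop
        (nhds (Real.log (Real.Gamma (y+t)))) :=
      ((Real.continuousAt_log (Real.Gamma_pos_of_pos hyt).ne').tendsto).comp
        (Real.GammaSeq_tendsto_Gamma (y+t))
    have h2 : Filter.Tendsto (fun n => Real.log (Real.GammaSeq (y+s) n)) atTop
        (nhds (Real.log (Real.Gamma (y+s)))) :=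
      ((Real.continuousAt_log (Real.Gamma_pos_of_pos hys).ne').tendsto).comp
        (Real.GammaSeq_tendsto_Gamma (y+s))
    apply (h1.sub h2).congr'
    filter_upwards [eventually_ge_atTop 1] with n hn
    rw [log_GammaSeq hyt hn, log_GammaSeq hys hn, Finset.sum_sub_distrib]
    ring

end ZE

namespace ZE2
open MeasureTheory ZC2 ZC4 ZB2 ZB5 ZD ZE Finset Filter

variable {s t : ℝ}

lemma hasDerivAt_SS (hs0 : 0 ≤ s) (hst : s < t) {x : ℝ} (hx : 0 < x) :
    HasDerivAt (fun y => ∑' k : ℕ, 1/((y+s+k)*(y+t+k)))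
      (∑' k : ℕ, -(1/((x+s+k)*(x+t+k)) * (1/(x+s+k)+1/(x+t+k)))) x := by
  apply hasDerivAt_of_tendstoLocallyUniformlyOn isOpen_Ioi (TLU_D2 hs0 hst)
    (f := fun (n : ℕ) (x : ℝ) => ∑ k ∈ Finset.range n, 1/((x+s+k)*(x+t+k)))
    (hx := mem_Ioi.2 hx)
  · apply Filter.Eventually.of_forall
    intro n y hy
    have hy0 : 0 < y := mem_Ioi.1 hy
    apply HasDerivAt.fun_sum
    intro k _
    have hk : (0:ℝ) ≤ k := Nat.cast_nonneg k
    exact hasDerivAt_term k (by linarith) (by linarith)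
  · intro y hy
    have hy0 : 0 < y := mem_Ioi.1 hy
    have hys : 0 < y + s := by linarith
    have hyt : 0 < y + t := by linarith
    exact (summable_uv hys hyt).hasSum.tendsto_sum_nat

end ZE2

noncomputable def z (s t x : ℝ) : ℝ :=
  (Real.Gamma (x + t) / Real.Gamma (x + s)) ^ ((1 : ℝ) / (t - s)) - x

namespace ZF
open MeasureTheory ZC2 ZC4 ZB2 ZB5 ZD ZE ZE2 Finset Filter

variable {s t : ℝ}

noncomputable def GG (s t x : ℝ) : ℝ :=
  Real.exp ((Real.log (Real.Gamma (x+t)) - Real.log (Real.Gamma (x+s))) / (t-s))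

lemma z_eq (hs0 : 0 ≤ s) (hst : s < t) {x : ℝ} (hx : 0 < x) :
    z s t x = GG s t x - x := by
  unfold z GG
  have h1 : 0 < Real.Gamma (x+t) := Real.Gamma_pos_of_pos (by linarith)
  have h2 : 0 < Real.Gamma (x+s) := Real.Gamma_pos_of_pos (by linarith)
  rw [Real.rpow_def_of_pos (div_pos h1 h2), Real.log_div h1.ne' h2.ne', mul_one_div]

lemma hasDerivAt_GG (hs0 : 0 ≤ s) (hst : s < t) {x : ℝ} (hx : 0 < x) :
    HasDerivAt (GG s t) (GG s t x * (∑' k : ℕ, 1/((x+s+k)*(x+t+k)))) x := by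
  have hH := hasDerivAt_H hs0 hst hx
  have h2 := (hH.div_const (t-s)).exp
  have hts : t - s ≠ 0 := by linarith
  have hsum : ∑' k : ℕ, (1/(x+s+k) - 1/(x+t+k))
      = (t-s) * ∑' k : ℕ, 1/((x+s+k)*(x+t+k)) := by
    rw [← tsum_mul_left]
    apply tsum_congr
    intro k
    have hk : (0:ℝ) ≤ k := Nat.cast_nonneg k
    exact term_eq (by linarith) (by linarith)
  convert h2 using 1
  · rfl
  rw [hsum]
  field_simp [GG]
  unfold GG
  ring

theorem main_convex (hs0 : 0 ≤ s) (hst : s < t) (ht1 : t ≤ s + 1) :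
    ConvexOn ℝ (Ioi 0) (z s t) := by
  have hts : (0:ℝ) < t - s := by linarith
  apply convexOn_of_hasDerivWithinAt2_nonneg (convex_Ioi 0)
    (f' := fun x => GG s t x * (∑' k : ℕ, 1/((x+s+k)*(x+t+k))) - 1)
    (f'' := fun x => GG s t x * ((∑' k : ℕ, 1/((x+s+k)*(x+t+k))) * (∑' k : ℕ, 1/((x+s+k)*(x+t+k)))
      - ∑' k : ℕ, (1/((x+s+k)*(x+t+k)) * (1/(x+s+k)+1/(x+t+k)))))
  · -- continuity
    apply ContinuousOn.congr (f := fun x => GG s t x - x)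
    · intro y hy
      have hy0 : 0 < y := mem_Ioi.1 hy
      exact (((hasDerivAt_GG hs0 hst hy0).sub (hasDerivAt_id y)).continuousAt).continuousWithinAt
    · intro y hy
      exact z_eq hs0 hst (mem_Ioi.1 hy)
  · -- first derivative
    intro x hx
    rw [interior_Ioi] at hx ⊢
    have hx0 : 0 < x := mem_Ioi.1 hx
    have h := ((hasDerivAt_GG hs0 hst hx0).sub (hasDerivAt_id x)).hasDerivWithinAt (s := Ioi 0)
    exact h.congr (fun y hy => z_eq hs0 hst (mem_Ioi.1 hy)) (z_eq hs0 hst hx0)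
  · -- second derivative
    intro x hx
    rw [interior_Ioi] at hx ⊢
    have hx0 : 0 < x := mem_Ioi.1 hx
    have h := ((hasDerivAt_GG hs0 hst hx0).mul (hasDerivAt_SS hs0 hst hx0)).sub_const 1
    have h2 : HasDerivAt (fun y => GG s t y * (∑' k : ℕ, 1/((y+s+k)*(y+t+k))) - 1)
        (GG s t x * ((∑' k : ℕ, 1/((x+s+k)*(x+t+k))) * (∑' k : ℕ, 1/((x+s+k)*(x+t+k)))
          - ∑' k : ℕ, (1/((x+s+k)*(x+t+k)) * (1/(x+s+k)+1/(x+t+k))))) x := by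
      convert h using 1
      · rfl
      · rfl
      · rfl
      rw [tsum_neg]
      ring
    exact h2.hasDerivWithinAt
  · -- nonnegativity
    intro x hx
    rw [interior_Ioi] at hx
    have hx0 : 0 < x := mem_Ioi.1 hx
    have hxs : 0 < x + s := by linarith
    have hxt : 0 < x + t := by linarith
    have hkey := key_inequality hxs (by linarith : x + s < x + t) (by linarith : x + t ≤ x + s + 1)
    apply mul_nonneg (Real.exp_pos _).le
    rw [sub_nonneg]
    calc ∑' k : ℕ, (1/((x+s+k)*(x+t+k)) * (1/(x+s+k)+1/(x+t+k)))
        ≤ (∑' k : ℕ, 1/((x+s+k)*(x+t+k)))^2 := hkey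
      _ = (∑' k : ℕ, 1/((x+s+k)*(x+t+k))) * (∑' k : ℕ, 1/((x+s+k)*(x+t+k))) := sq _

lemma z_swap (hs0 : 0 ≤ s) (ht0 : 0 ≤ t) {y : ℝ} (hy : 0 < y) : z s t y = z t s y := by
  unfold z
  congr 1
  have hP : 0 < Real.Gamma (y+t) / Real.Gamma (y+s) :=
    div_pos (Real.Gamma_pos_of_pos (by linarith)) (Real.Gamma_pos_of_pos (by linarith))
  have hst : (1:ℝ)/(s-t) = -(1/(t-s)) := by
    rw [show s - t = -(t-s) by ring, div_neg]
  rw [show Real.Gamma (y+s) / Real.Gamma (y+t) = (Real.Gamma (y+t)/Real.Gamma (y+s))⁻¹ by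
    rw [inv_div], hst, Real.rpow_neg (inv_nonneg.2 hP.le), Real.inv_rpow hP.le, inv_inv]

end ZF

theorem z_convex (s t : ℝ) (hs : 0 ≤ s) (ht : 0 ≤ t)
    (h0 : 0 < |t - s|) (h1 : |t - s| < 1) :
    ConvexOn ℝ (Set.Ioi 0) (z s t) := by
  rcases lt_trichotomy s t with hst | heq | hts
  · have habs : |t - s| = t - s := abs_of_pos (by linarith)
    rw [habs] at h1
    exact ZF.main_convex hs hst (by linarith)
  · rw [heq] at h0
    simp at h0
  · have habs : |t - s| = s - t := by
      rw [abs_of_neg (by linarith : t - s < 0)]; ring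
    rw [habs] at h1
    have hconv := ZF.main_convex ht hts (by linarith)
    obtain ⟨hset, hineq⟩ := hconv
    refine ⟨hset, ?_⟩
    intro p hp q hq a b ha hb hab
    have hmem : a • p + b • q ∈ Set.Ioi (0:ℝ) := hset hp hq ha hb hab
    rw [ZF.z_swap hs ht (Set.mem_Ioi.1 hp), ZF.z_swap hs ht (Set.mem_Ioi.1 hq),
      ZF.z_swap hs ht (Set.mem_Ioi.1 hmem)]
    exact hineq hp hq ha hb hab
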